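/- Let ℒ be a real decomposition of ℂ^n (i.e. for every L ∈ ℒ, the complex-conjugate subspace L̄ also belongs to ℒ), let (m_L)_{L∈ℒ} ⊂ (1/2)ℤ^d, and let Ψ(θ) = Σ_{L∈ℒ} e^{2πi⟨m_L,θ⟩}P_L. Then Ψ(θ) has real entries for every θ ∈ ℝ^d if and only if m_L = −m_{L̄} for every L ∈ ℒ. Moreover, if Ψ is real-valued then det Ψ(θ) = 1 for all θ, i.e. Ψ takes values in SL(n,ℝ). -/

import Mathlib

open scoped BigOperators
open MeasureTheory Matrix

noncomputable section

attribute [local instance] Matrix.linftyOpNormedAddCommGroup Matrix.linftyOpNormedSpace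

/-- Iterated partial derivative with multi-index `α`. -/
def mpd {d : ℕ} {E : Type*} [NormedAddCommGroup E] [NormedSpace ℝ E]
    (α : Fin d → ℕ) (f : (Fin d → ℝ) → E) : (Fin d → ℝ) → E :=
  (List.finRange d).foldr
    (fun i g =>
      (fun (h : (Fin d → ℝ) → E) (θ : Fin d → ℝ) => fderiv ℝ h θ (Pi.single i 1))^[α i] g) f

/-- The quantity whose supremum over `p = (α, θ)` is the Gevrey-2 norm `‖f‖_r`. -/
def gevreyQ {d : ℕ} {E : Type*} [NormedAddCommGroup E] [NormedSpace ℝ E]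
    (r : ℝ) (f : (Fin d → ℝ) → E) (p : (Fin d → ℕ) × (Fin d → ℝ)) : ℝ :=
  r ^ (2 * ∑ i, p.1 i) / ((∏ i, Nat.factorial (p.1 i) : ℕ) : ℝ) ^ 2 * ‖mpd p.1 f p.2‖

/-- `‖f‖_r ≤ M`. -/
def GevreyLe {d : ℕ} {E : Type*} [NormedAddCommGroup E] [NormedSpace ℝ E]
    (r : ℝ) (f : (Fin d → ℝ) → E) (M : ℝ) : Prop :=
  ∀ p, gevreyQ r f p ≤ M

/-- The Gevrey-2 norm of `f` is finite. -/
def GevreyFinite {d : ℕ} {E : Type*} [NormedAddCommGroup E] [NormedSpace ℝ E]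
    (r : ℝ) (f : (Fin d → ℝ) → E) : Prop :=
  BddAbove (Set.range (gevreyQ r f))

/-- The Gevrey-2 norm `‖f‖_r`. -/
def gevreyNorm {d : ℕ} {E : Type*} [NormedAddCommGroup E] [NormedSpace ℝ E]
    (r : ℝ) (f : (Fin d → ℝ) → E) : ℝ :=
  ⨆ p, gevreyQ r f p

/-- `ℤ^d`-periodicity (function on the torus `𝕋^d`). -/
def Per1 {d : ℕ} {E : Type*} (f : (Fin d → ℝ) → E) : Prop :=
  ∀ (θ : Fin d → ℝ) (k : Fin d → ℤ), f (θ + fun i => (k i : ℝ)) = f θ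

/-- `2ℤ^d`-periodicity (function on the double torus `2𝕋^d`). -/
def Per2 {d : ℕ} {E : Type*} (f : (Fin d → ℝ) → E) : Prop :=
  ∀ (θ : Fin d → ℝ) (k : Fin d → ℤ), f (θ + fun i => 2 * (k i : ℝ)) = f θ

/-- The character `e^{2πi⟨m/2,θ⟩}` attached to the half-integer vector `m/2`, `m ∈ ℤ^d`. -/
def eHalf {d : ℕ} (m : Fin d → ℤ) (θ : Fin d → ℝ) : ℂ :=
  Complex.exp ((2 * Real.pi * Complex.I) * ∑ i, ((m i : ℂ) / 2) * (θ i : ℂ))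

/-- `|m/2| = |m₁|/2 + ⋯ + |m_d|/2` for a half-integer vector `m/2`. -/
def hnorm {d : ℕ} (m : Fin d → ℤ) : ℝ := (∑ i, |(m i : ℝ)|) / 2

/-- Fourier coefficient `f̂(m/2) = 2^{-d}∫_{[0,2]^d} f(θ)e^{-2πi⟨m/2,θ⟩}dθ`. -/
def fourierC {d n : ℕ} (f : (Fin d → ℝ) → Matrix (Fin n) (Fin n) ℂ) (m : Fin d → ℤ) :
    Matrix (Fin n) (Fin n) ℂ :=
  ((2 : ℝ) ^ d)⁻¹ • ∫ θ in Set.Icc (0 : Fin d → ℝ) (fun _ => 2), eHalf (-m) θ • f θ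

/-- Truncation of `f` at order `N`: `f^N = Σ_{|m|≤N} f̂(m)e^{2πi⟨m,·⟩}`. -/
def truncN {d n : ℕ} (N : ℕ) (f : (Fin d → ℝ) → Matrix (Fin n) (Fin n) ℂ) :
    (Fin d → ℝ) → Matrix (Fin n) (Fin n) ℂ :=
  fun θ => ∑ m ∈ (Finset.Icc (fun _ => -(2 * (N : ℤ))) (fun _ => (2 * (N : ℤ)))).filter
      (fun m : Fin d → ℤ => hnorm m ≤ N),
    eHalf m θ • fourierC f m

/-- `ω` is Diophantine with constant `κ` and exponent `τ`. -/
def IsDioph {d : ℕ} (ω : Fin d → ℝ) (κ τ : ℝ) : Prop :=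
  ∀ m : Fin d → ℤ, m ≠ 0 → κ / (∑ i, |(m i : ℝ)|) ^ τ ≤ |∑ i, (m i : ℝ) * ω i|

/-- `A` has `DC^N_ω(κ',τ)` spectrum. -/
def DCspec {d n : ℕ} (ω : Fin d → ℝ) (N : ℕ) (κ' τ : ℝ)
    (A : Matrix (Fin n) (Fin n) ℂ) : Prop :=
  ∀ α ∈ spectrum ℂ A, ∀ β ∈ spectrum ℂ A, ∀ m : Fin d → ℤ, m ≠ 0 → hnorm m ≤ N →
    κ' / hnorm m ^ τ ≤
      ‖α - β - (2 * Real.pi * Complex.I) * ∑ i, ((m i : ℂ) / 2) * (ω i : ℂ)‖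

/-- The trivial map `Φ(θ) = Σ_L e^{2πi⟨m_L,θ⟩}P_L` attached to a decomposition. -/
def PhiTriv {d n s : ℕ} (P : Fin s → Matrix (Fin n) (Fin n) ℂ)
    (m : Fin s → Fin d → ℤ) (θ : Fin d → ℝ) : Matrix (Fin n) (Fin n) ℂ :=
  ∑ L, eHalf (m L) θ • P L

/-- `F` has good periodicity properties w.r.t. the decomposition `P` and the family `m`:
`Φ⁻¹FΦ` is `ℤ^d`-periodic. -/
def GoodPer {d n s : ℕ} (F : (Fin d → ℝ) → Matrix (Fin n) (Fin n) ℂ)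
    (P : Fin s → Matrix (Fin n) (Fin n) ℂ) (m : Fin s → Fin d → ℤ) : Prop :=
  Per1 (fun θ => PhiTriv P (fun L => -(m L)) θ * F θ * PhiTriv P m θ)

/-- Directional derivative `∂_ω f`. -/
def dOm {d : ℕ} {E : Type*} [NormedAddCommGroup E] [NormedSpace ℝ E]
    (ω : Fin d → ℝ) (f : (Fin d → ℝ) → E) (θ : Fin d → ℝ) : E :=
  fderiv ℝ f θ ω

namespace Stmt5Aux

variable {d : ℕ}

lemma eHalf_eq (m : Fin d → ℤ) (θ : Fin d → ℝ) :
    eHalf m θ = Complex.exp ((Real.pi : ℂ) * Complex.I * ((∑ i, (m i : ℝ) * θ i : ℝ) : ℂ)) := by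
  unfold eHalf
  congr 1
  push_cast
  rw [Finset.mul_sum, Finset.mul_sum]
  exact Finset.sum_congr rfl fun i _ => by ring

lemma eHalf_add (m : Fin d → ℤ) (θ θ' : Fin d → ℝ) :
    eHalf m (θ + θ') = eHalf m θ * eHalf m θ' := by
  rw [eHalf_eq, eHalf_eq, eHalf_eq, ← Complex.exp_add]
  congr 1
  have h : (∑ i, (m i : ℝ) * (θ + θ') i) = (∑ i, (m i : ℝ) * θ i) + ∑ i, (m i : ℝ) * θ' i := by
    rw [← Finset.sum_add_distrib]
    exact Finset.sum_congr rfl fun i _ => by simp [Pi.add_apply]; ring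
  rw [h]
  push_cast
  ring

lemma eHalf_zero' (m : Fin d → ℤ) : eHalf m (0 : Fin d → ℝ) = 1 := by
  rw [eHalf_eq]; simp

lemma conj_eHalf (m : Fin d → ℤ) (θ : Fin d → ℝ) :
    (starRingEnd ℂ) (eHalf m θ) = eHalf (-m) θ := by
  rw [eHalf_eq, eHalf_eq, ← Complex.exp_conj]
  congr 1
  have h : (∑ i, ((-m) i : ℝ) * θ i) = -(∑ i, (m i : ℝ) * θ i) := by
    rw [← Finset.sum_neg_distrib]
    exact Finset.sum_congr rfl fun i _ => by simp
  rw [h]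
  simp only [_root_.map_mul, Complex.conj_I, Complex.conj_ofReal]
  push_cast
  ring

lemma abs_eHalf (m : Fin d → ℤ) (θ : Fin d → ℝ) : ‖eHalf m θ‖ = 1 := by
  rw [eHalf_eq]
  have h : ((Real.pi : ℂ) * Complex.I * ((∑ i, (m i : ℝ) * θ i : ℝ) : ℂ))
      = ((Real.pi * ∑ i, (m i : ℝ) * θ i : ℝ) : ℂ) * Complex.I := by push_cast; ring
  rw [h, Complex.norm_exp]
  simp

lemma eHalf_single (m : Fin d → ℤ) (j : Fin d) (t : ℝ) :
    eHalf m (Pi.single j t) = Complex.exp ((Real.pi : ℂ) * Complex.I * (((m j : ℝ) * t : ℝ) : ℂ)) := by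
  rw [eHalf_eq]
  congr 2
  rw [Finset.sum_eq_single j]
  · simp
  · intro i _ hi; simp [Pi.single_apply, hi]
  · simp

lemma eHalf_inj {m m' : Fin d → ℤ} (h : ∀ θ, eHalf m θ = eHalf m' θ) : m = m' := by
  funext j
  by_contra hne
  have hk0 : ((m j - m' j : ℤ) : ℝ) ≠ 0 := by
    exact_mod_cast sub_ne_zero.mpr hne
  set t : ℝ := 1 / ((m j - m' j : ℤ) : ℝ) with ht
  have h1 := h (Pi.single j t)
  rw [eHalf_single, eHalf_single] at h1
  have h2 : Complex.exp ((Real.pi : ℂ) * Complex.I * (((m j : ℝ) * t : ℝ) : ℂ)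
      - (Real.pi : ℂ) * Complex.I * (((m' j : ℝ) * t : ℝ) : ℂ)) = 1 := by
    rw [Complex.exp_sub, h1, div_self (Complex.exp_ne_zero _)]
  have h3 : ((Real.pi : ℂ) * Complex.I * (((m j : ℝ) * t : ℝ) : ℂ)
      - (Real.pi : ℂ) * Complex.I * (((m' j : ℝ) * t : ℝ) : ℂ))
      = (Real.pi : ℂ) * Complex.I * ((((m j : ℝ) - (m' j : ℝ)) * t : ℝ) : ℂ) := by
    push_cast; ring
  have h4 : (((m j : ℝ) - (m' j : ℝ)) * t : ℝ) = 1 := by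
    rw [ht]
    push_cast at hk0 ⊢
    field_simp
  rw [h3, h4] at h2
  simp only [Complex.ofReal_one, mul_one] at h2
  rw [Complex.exp_pi_mul_I] at h2
  norm_num at h2


variable {n s : ℕ}

lemma PhiTriv_mul_proj (P : Fin s → Matrix (Fin n) (Fin n) ℂ)
    (hidem : ∀ L, P L * P L = P L)
    (horth : ∀ L L', L ≠ L' → P L * P L' = 0)
    (m : Fin s → Fin d → ℤ) (L₀ : Fin s) (θ : Fin d → ℝ) :
    PhiTriv P m θ * P L₀ = eHalf (m L₀) θ • P L₀ := by
  unfold PhiTriv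
  rw [Finset.sum_mul, Finset.sum_eq_single L₀]
  · rw [smul_mul_assoc, hidem]
  · intro L _ hL
    rw [smul_mul_assoc, horth L L₀ hL, smul_zero]
  · simp

lemma PhiTriv_mul (P : Fin s → Matrix (Fin n) (Fin n) ℂ)
    (hidem : ∀ L, P L * P L = P L)
    (horth : ∀ L L', L ≠ L' → P L * P L' = 0)
    (m : Fin s → Fin d → ℤ) (θ θ' : Fin d → ℝ) :
    PhiTriv P m θ * PhiTriv P m θ' = PhiTriv P m (θ + θ') := by
  have expand : PhiTriv P m θ * PhiTriv P m θ' = ∑ L, eHalf (m L) θ' • (PhiTriv P m θ * P L) := by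
    rw [show PhiTriv P m θ' = ∑ L, eHalf (m L) θ' • P L from rfl, Finset.mul_sum]
    exact Finset.sum_congr rfl fun L _ => (mul_smul_comm _ _ _)
  rw [expand, show PhiTriv P m (θ + θ') = ∑ L, eHalf (m L) (θ + θ') • P L from rfl]
  refine Finset.sum_congr rfl fun L _ => ?_
  rw [PhiTriv_mul_proj P hidem horth m L θ, smul_smul, mul_comm, ← eHalf_add]

lemma PhiTriv_zero (P : Fin s → Matrix (Fin n) (Fin n) ℂ)
    (hsum : ∑ L, P L = 1) (m : Fin s → Fin d → ℤ) :
    PhiTriv P m (0 : Fin d → ℝ) = 1 := by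
  unfold PhiTriv
  simp only [eHalf_zero', one_smul]
  exact hsum

lemma conj_PhiTriv (P : Fin s → Matrix (Fin n) (Fin n) ℂ)
    (σ : Fin s → Fin s) (hσ : ∀ L, σ (σ L) = L)
    (hconj : ∀ L, P (σ L) = (P L).map (starRingEnd ℂ))
    (m : Fin s → Fin d → ℤ) (θ : Fin d → ℝ) :
    (PhiTriv P m θ).map (starRingEnd ℂ) = PhiTriv P (fun L => -(m (σ L))) θ := by
  ext i j
  simp only [Matrix.map_apply, PhiTriv, Matrix.sum_apply, Matrix.smul_apply, smul_eq_mul,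
    map_sum, _root_.map_mul, conj_eHalf]
  have hPij : ∀ L, (starRingEnd ℂ) (P L i j) = P (σ L) i j := by
    intro L; rw [hconj L]; rfl
  have h1 : (∑ L, eHalf (-m L) θ * (starRingEnd ℂ) (P L i j))
      = ∑ L, (fun L' => eHalf (-(m (σ L'))) θ * P L' i j) (σ L) := by
    refine Finset.sum_congr rfl fun L _ => ?_
    simp only [hPij, hσ]
  rw [h1]
  exact Fintype.sum_bijective σ (Function.Involutive.bijective hσ) _ _ (fun L => rfl)

end Stmt5Aux

/-- for a real decomposition of `ℂ^n` (conjugation acts on the subspaces via the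
involution `σ`, so that `P_{L̄} = conj(P_L)`), the trivial map
`Ψ(θ) = Σ_L e^{2πi⟨m_L,θ⟩}P_L` is real-valued iff `m_{L̄} = −m_L` for all `L`; and if it is
real-valued then it takes values in `SL(n,ℝ)`. -/
theorem stmt_5 (d n s : ℕ) (P : Fin s → Matrix (Fin n) (Fin n) ℂ)
    (hsum : ∑ L, P L = 1)
    (hidem : ∀ L, P L * P L = P L)
    (horth : ∀ L L', L ≠ L' → P L * P L' = 0)
    (hne : ∀ L, P L ≠ 0)
    (σ : Fin s → Fin s) (hσ : ∀ L, σ (σ L) = L)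
    (hconj : ∀ L, P (σ L) = (P L).map (starRingEnd ℂ))
    (m : Fin s → Fin d → ℤ) :
    ((∀ (θ : Fin d → ℝ) (i j : Fin n), (PhiTriv P m θ i j).im = 0) ↔
        ∀ L, m (σ L) = -(m L)) ∧
    ((∀ (θ : Fin d → ℝ) (i j : Fin n), (PhiTriv P m θ i j).im = 0) →
        ∀ θ : Fin d → ℝ, (PhiTriv P m θ).det = 1) := by
  classical
  have himp : (∀ (θ : Fin d → ℝ) (i j : Fin n), (PhiTriv P m θ i j).im = 0) →
      ∀ θ, (PhiTriv P m θ).map (starRingEnd ℂ) = PhiTriv P m θ := by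
    intro hre θ
    ext i j
    exact Complex.conj_eq_iff_im.mpr (hre θ i j)
  constructor
  · constructor
    · -- forward direction
      intro hre L₀
      have key : ∀ θ, eHalf (m L₀) θ = eHalf (-(m (σ L₀))) θ := by
        intro θ
        have h1 := Stmt5Aux.PhiTriv_mul_proj P hidem horth m L₀ θ
        have h2 : PhiTriv P m θ = PhiTriv P (fun L => -(m (σ L))) θ := by
          rw [← Stmt5Aux.conj_PhiTriv P σ hσ hconj m θ, himp hre θ]
        have h3 := Stmt5Aux.PhiTriv_mul_proj P hidem horth (fun L => -(m (σ L))) L₀ θ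
        have h4 : eHalf (m L₀) θ • P L₀ = eHalf (-(m (σ L₀))) θ • P L₀ := by
          rw [← h1, h2]; exact h3
        have h5 : (eHalf (m L₀) θ - eHalf (-(m (σ L₀))) θ) • P L₀ = 0 := by
          rw [sub_smul, h4, sub_self]
        rcases smul_eq_zero.mp h5 with h | h
        · exact sub_eq_zero.mp h
        · exact absurd h (hne L₀)
      have h6 : m L₀ = -(m (σ L₀)) := Stmt5Aux.eHalf_inj key
      rw [show m (σ L₀) = -(-(m (σ L₀))) by rw [neg_neg], ← h6]
    · -- backward direction
      intro hm θ i j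
      have hmm : (fun L => -(m (σ L))) = m := by
        funext L; rw [hm L, neg_neg]
      have h1 : (PhiTriv P m θ).map (starRingEnd ℂ) = PhiTriv P m θ := by
        rw [Stmt5Aux.conj_PhiTriv P σ hσ hconj m θ, hmm]
      have h2 : (starRingEnd ℂ) (PhiTriv P m θ i j) = PhiTriv P m θ i j := by
        conv_rhs => rw [← h1]
        rfl
      exact Complex.conj_eq_iff_im.mp h2
  · -- determinant part
    intro hre θ
    set D : (Fin d → ℝ) → ℂ := fun φ => (PhiTriv P m φ).det with hD
    have hmul : ∀ φ φ', D φ * D φ' = D (φ + φ') := by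
      intro φ φ'
      simp only [hD]
      rw [← Matrix.det_mul, Stmt5Aux.PhiTriv_mul P hidem horth m φ φ']
    have hD0 : D 0 = 1 := by
      simp only [hD]
      rw [Stmt5Aux.PhiTriv_zero P hsum m, Matrix.det_one]
    have him : ∀ φ, (D φ).im = 0 := by
      intro φ
      have h1 : (starRingEnd ℂ) (D φ) = D φ := by
        simp only [hD]
        rw [RingHom.map_det]
        congr 1
        exact himp hre φ
      exact Complex.conj_eq_iff_im.mp h1
    -- boundedness
    set C : ℝ := ∑ L, ∑ i, ∑ j, ‖P L i j‖ with hC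
    have hbound : ∀ φ, ‖D φ‖ ≤
        Nat.factorial (Fintype.card (Fin n)) • C ^ Fintype.card (Fin n) := by
      intro φ
      apply Matrix.det_le (abv := IsAbsoluteValue.toAbsoluteValue (norm : ℂ → ℝ))
      intro i j
      have e1 : PhiTriv P m φ i j = ∑ L, eHalf (m L) φ * P L i j := by
        simp [PhiTriv, Matrix.sum_apply]
      rw [e1]
      calc ‖∑ L, eHalf (m L) φ * P L i j‖
          ≤ ∑ L, ‖eHalf (m L) φ * P L i j‖ := norm_sum_le _ _
        _ = ∑ L, ‖P L i j‖ := by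
            refine Finset.sum_congr rfl fun L _ => ?_
            rw [norm_mul, Stmt5Aux.abs_eHalf, one_mul]
        _ ≤ C := by
            rw [hC]
            refine Finset.sum_le_sum fun L _ => ?_
            calc ‖P L i j‖
                ≤ ∑ j', ‖P L i j'‖ :=
                  Finset.single_le_sum (fun j' _ => norm_nonneg _) (Finset.mem_univ j)
              _ ≤ ∑ i', ∑ j', ‖P L i' j'‖ :=
                  Finset.single_le_sum
                    (f := fun i' => ∑ j', ‖P L i' j'‖)
                    (fun i' _ => Finset.sum_nonneg fun j' _ => norm_nonneg _)
                    (Finset.mem_univ i)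
    set M : ℝ := Nat.factorial (Fintype.card (Fin n)) • C ^ Fintype.card (Fin n) with hM
    have hpow : ∀ (φ : Fin d → ℝ) (k : ℕ), (D φ) ^ k = D (fun i => (k : ℝ) * φ i) := by
      intro φ k
      induction k with
      | zero =>
          have h0 : (fun i => ((0 : ℕ) : ℝ) * φ i) = (0 : Fin d → ℝ) := by
            funext i; simp
          rw [h0, hD0, pow_zero]
      | succ k ih =>
          rw [pow_succ, ih, hmul]
          congr 1
          funext i
          simp [Pi.add_apply]
          ring
    have habs_le : ∀ φ : Fin d → ℝ, ‖D φ‖ ≤ 1 := by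
      intro φ
      by_contra h
      push_neg at h
      obtain ⟨k, hk⟩ := pow_unbounded_of_one_lt M h
      have := hbound (fun i => (k : ℝ) * φ i)
      rw [← hpow φ k, norm_pow] at this
      exact absurd this (not_le.mpr hk)
    have hainv : D θ * D (-θ) = 1 := by
      rw [hmul]
      have : θ + -θ = (0 : Fin d → ℝ) := by funext i; simp
      rw [this, hD0]
    have habs1 : ‖D θ‖ = 1 := by
      have h1 := habs_le θ
      have h2 := habs_le (-θ)
      have h3 : ‖D θ‖ * ‖D (-θ)‖ = 1 := by
        rw [← norm_mul, hainv, norm_one]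
      nlinarith [norm_nonneg (D θ), norm_nonneg (D (-θ))]
    -- positivity of real part
    have hhalf : D (fun i => θ i / 2) * D (fun i => θ i / 2) = D θ := by
      rw [hmul]
      congr 1
      funext i
      simp [Pi.add_apply]
    have hre_nonneg : 0 ≤ (D θ).re := by
      rw [← hhalf, Complex.mul_re, him (fun i => θ i / 2)]
      simpa using mul_self_nonneg ((D (fun i => θ i / 2)).re)
    have haeq : D θ = ((D θ).re : ℂ) := by
      apply Complex.ext
      · simp
      · simp [him θ]
    have hre1 : (D θ).re = 1 := by
      have := habs1
      rw [haeq, Complex.norm_real, Real.norm_eq_abs, abs_of_nonneg hre_nonneg] at this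
      exact this
    show D θ = 1
    rw [haeq, hre1, Complex.ofReal_one]
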